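/- arXiv:1209.1649 — 2 statements merged into one kernel-verified Lean document; each statement's English description precedes it below -/
import Mathlib

section
/- Necessity of the eigenvalue recursion (equation (11) of the paper): Let m ≥ 2. Suppose u : ℝ^{n−1} → ℝ is an eigenfunction of Δ_m with eigenvalue λ_m ∉ {2, n+2, 2n}, its restriction to V_{m−1} is an eigenfunction of Δ_{m−1} with eigenvalue λ_{m−1}, and u(x) ≠ 0 for some x ∈ V_{m−1} \ V_0. Then λ_m² − (n+2)λ_m + λ_{m−1} = 0. -/
open Finset

noncomputable section

/-- Ambient Euclidean space `ℝ^{n-1}`. -/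
abbrev Amb (n : ℕ) := EuclideanSpace ℝ (Fin (n - 1))

/-- The contraction `f_i(x) = (x + x_i)/2`. -/
def fmap {n : ℕ} (pts : Fin n → Amb n) (i : Fin n) (x : Amb n) : Amb n :=
  (2 : ℝ)⁻¹ • (x + pts i)

/-- Composition of contractions along a list (first entry applied last... actually first). -/
def fList {n : ℕ} (pts : Fin n → Amb n) : List (Fin n) → Amb n → Amb n
  | [] => id
  | i :: t => fmap pts i ∘ fList pts t

/-- The `m`-contraction `f_w = f_{w_0} ∘ ⋯ ∘ f_{w_{m-1}}`. -/
def fWord {n m : ℕ} (pts : Fin n → Amb n) (w : Fin m → Fin n) : Amb n → Amb n :=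
  fList pts (List.ofFn w)

/-- The vertex set `V_m = ⋃_w f_w(V_0)`, where `V_0 = {x_0, …, x_{n-1}}`. -/
def V {n : ℕ} (pts : Fin n → Amb n) (m : ℕ) : Set (Amb n) :=
  ⋃ w : Fin m → Fin n, fWord pts w '' Set.range pts

/-- Adjacency in the graph `Γ_m`. -/
def Adj {n : ℕ} (pts : Fin n → Amb n) (m : ℕ) (x y : Amb n) : Prop :=
  x ≠ y ∧ ∃ w : Fin m → Fin n,
    x ∈ fWord pts w '' Set.range pts ∧ y ∈ fWord pts w '' Set.range pts

/-- The graph Laplacian `Δ_m u (x) = ∑_{y ~ x} (u(x) - u(y))`. -/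
def lap {n : ℕ} (pts : Fin n → Amb n) (m : ℕ) (u : Amb n → ℝ) (x : Amb n) : ℝ :=
  ∑ᶠ y ∈ {y | Adj pts m x y}, (u x - u y)

/-- `u` is an eigenfunction of `Δ_m` with eigenvalue `lam`:
`Δ_m u (x) = lam * u x` for all `x ∈ V_m \ V_0`. -/
def IsEigen {n : ℕ} (pts : Fin n → Amb n) (m : ℕ) (u : Amb n → ℝ) (lam : ℝ) : Prop :=
  ∀ x ∈ V pts m \ V pts 0, lap pts m u x = lam * u x

/-- The point `x_{r,s} = f_a((x_r + x_s)/2)` for a word `a` of length `m-1`. -/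
def xpt {n m : ℕ} (pts : Fin n → Amb n) (a : Fin m → Fin n) (r s : Fin n) : Amb n :=
  fWord pts a ((2 : ℝ)⁻¹ • (pts r + pts s))

/-- The graph energy `E_m(u) = ∑_{x ~ y} (u(x) - u(y))²`, summed over unordered
adjacent pairs (each ordered pair counted once, then halved). -/
def energy {n : ℕ} (pts : Fin n → Amb n) (m : ℕ) (u : Amb n → ℝ) : ℝ :=
  (2 : ℝ)⁻¹ * ∑ᶠ p ∈ {p : Amb n × Amb n | Adj pts m p.1 p.2}, (u p.1 - u p.2) ^ 2

/-!
A point `x ∈ V_{m-1} \ V_0` is `f_A(x_q) = f_B(x_p)` for exactly two `(m-1)`-cells,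
`A = c p q^k` and `B = c q p^k`: the barycentric coordinates of `f_l(x_j)` are dyadic and
determine `(l, j)` up to this swap. At level `m`, `x` is the common vertex of the subcells `Aq`
and `Bp`. Summing the `Δ_m`-equations at the points `f_{As}(x_t)`, `s ≠ t`, of one cell `A` gives
`(2-λ)(n+2-λ) ∑_r u(f_{As}(x_r)) = (2-λ)(2n-λ) u(f_A(x_s)) + (2n-λ) ∑_a u(f_A(x_a))`.
Adding this for the two cells at `x` and substituting the `Δ_m`- and `Δ_{m-1}`-equations at `x`
leaves `(2n-λ)(λ² - (n+2)λ + λ') u(x) = 0`.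
-/

lemma List.exists_eq_append_cons_replicate {α : Type*} {l : List α} {j : α}
    (h : l ≠ List.replicate l.length j) :
    ∃ (c : List α) (p : α) (k : ℕ), p ≠ j ∧ l = c ++ p :: List.replicate k j := by
  induction l using List.reverseRecOn with
  | nil => simp at h
  | append_singleton l a ih =>
    by_cases ha : a = j
    · subst ha
      obtain ⟨c, p, k, hp, rfl⟩ := ih fun hl => h (by
        rw [List.length_append, List.length_singleton, List.replicate_succ', ← hl])
      exact ⟨c, p, k + 1, hp, by simp [List.replicate_succ']⟩
    · exact ⟨l, a, 0, ha, by simp⟩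

lemma List.exists_ofFn_iff {α : Type*} {m : ℕ} {P : List α → Prop} :
    (∃ w : Fin m → α, P (List.ofFn w)) ↔ ∃ l : List α, l.length = m ∧ P l := by
  refine ⟨fun ⟨w, hw⟩ => ⟨_, List.length_ofFn, hw⟩, ?_⟩
  rintro ⟨l, rfl, hl⟩
  exact ⟨l.get, by rwa [List.ofFn_get]⟩

namespace SpectralDecimation

section Barycentric

variable {ι : Type*} [DecidableEq ι]

/-- Barycentric coordinates of the point `f_l(x_j)` with respect to `x_0, …, x_{n-1}`. -/
def bary : List ι → ι → ι → ℝ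
  | [], j => fun r => if r = j then 1 else 0
  | i :: l, j => fun r => ((if r = i then 1 else 0) + bary l j r) / 2

lemma bary_mem_Icc (l : List ι) (j r : ι) : bary l j r ∈ Set.Icc (0 : ℝ) 1 := by
  induction l with
  | nil => by_cases h : r = j <;> simp [bary, h]
  | cons i l ih =>
    obtain ⟨h0, h1⟩ := ih
    simp only [bary, Set.mem_Icc]
    constructor <;> split_ifs <;> linarith

lemma sum_bary [Fintype ι] (l : List ι) (j : ι) : ∑ r, bary l j r = 1 := by
  induction l with
  | nil => simp [bary]
  | cons i l ih => simp [bary, ← Finset.sum_div, Finset.sum_add_distrib, ih]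

lemma bary_eq_one_iff (l : List ι) (j r : ι) :
    bary l j r = 1 ↔ l = List.replicate l.length r ∧ j = r := by
  induction l with
  | nil => by_cases h : r = j <;> simp [bary, h, Ne.symm]
  | cons i l ih =>
    have := (bary_mem_Icc l j r).2
    rw [List.length_cons, List.replicate_succ, List.cons.injEq, and_assoc, ← ih, eq_comm (a := i)]
    by_cases h : r = i
    · simp only [bary, h, if_true, true_and]
      constructor <;> intro <;> linarith
    · simp only [bary, h, if_false, false_and, iff_false]
      linarith

lemma bary_cons_injective {i : ι} {l l' : List ι} {j j' : ι}
    (h : bary (i :: l) j = bary (i :: l') j') : bary l j = bary l' j' := by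
  funext r
  have := congrFun h r
  simp only [bary] at this
  linarith

lemma bary_injective (l : List ι) : Function.Injective (bary l) := by
  induction l with
  | nil => exact fun j j' h => by simpa [bary] using congrFun h j
  | cons i l ih => exact fun j j' h => ih (bary_cons_injective h)

lemma bary_eq_one_of_cons_ne {i i' : ι} {l l' : List ι} {j j' : ι} (hi : i ≠ i')
    (h : bary (i :: l) j = bary (i' :: l') j') : bary l' j' i = 1 := by
  have := congrFun h i
  have := (bary_mem_Icc l j i).1
  have := (bary_mem_Icc l' j' i).2
  simp only [bary, if_true, if_neg hi] at *
  linarith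

lemma bary_replicate_self (k : ℕ) (q : ι) : bary (List.replicate k q) q q = 1 :=
  (bary_eq_one_iff _ _ _).2 ⟨by rw [List.length_replicate], rfl⟩

lemma bary_junction_ne_one {c : List ι} {p q : ι} {k : ℕ} (hpq : p ≠ q) (i : ι) :
    bary (c ++ p :: List.replicate k q) q i ≠ 1 := by
  rw [Ne, bary_eq_one_iff]
  rintro ⟨hrep, rfl⟩
  have hp : p ∈ c ++ p :: List.replicate k q := List.mem_append_right c List.mem_cons_self
  rw [hrep] at hp
  exact hpq (List.eq_of_mem_replicate hp)

/-- `f_A(x_q) = f_B(x_p)` for `A = c p q^k` and `B = c q p^k` is the only coincidence between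
vertices of cells of the same level. -/
theorem eq_of_bary_eq_junction {c l : List ι} {p q j : ι} {k : ℕ} (hpq : p ≠ q)
    (hlen : l.length = (c ++ p :: List.replicate k q).length)
    (h : bary l j = bary (c ++ p :: List.replicate k q) q) :
    (l = c ++ p :: List.replicate k q ∧ j = q) ∨
      (l = c ++ q :: List.replicate k p ∧ j = p) := by
  induction c generalizing l with
  | nil =>
    obtain ⟨i, l, rfl⟩ := List.exists_cons_of_length_eq_add_one (by simpa using hlen)
    simp only [List.length_cons, List.length_replicate, List.nil_append, Nat.add_right_cancel_iff,
      List.cons.injEq] at hlen ⊢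
    by_cases hi : i = p
    · subst hi
      obtain ⟨hl, rfl⟩ :=
        (bary_eq_one_iff l j q).1 (by rw [bary_cons_injective h, bary_replicate_self])
      exact Or.inl ⟨⟨rfl, hlen ▸ hl⟩, rfl⟩
    · obtain ⟨-, rfl⟩ := (bary_eq_one_iff _ _ _).1 (bary_eq_one_of_cons_ne hi h)
      obtain ⟨hl, rfl⟩ := (bary_eq_one_iff l j p).1 (bary_eq_one_of_cons_ne (Ne.symm hi) h.symm)
      exact Or.inr ⟨⟨rfl, hlen ▸ hl⟩, rfl⟩
  | cons a c ih =>
    obtain ⟨i, l, rfl⟩ := List.exists_cons_of_length_eq_add_one (by simpa using hlen)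
    by_cases hi : i = a
    · subst hi
      simpa using ih (by simpa using hlen) (bary_cons_injective h)
    · exact absurd (bary_eq_one_of_cons_ne hi h) (bary_junction_ne_one hpq i)

theorem eq_of_bary_eq_junction_swap {c : List ι} {p q t s : ι} {k : ℕ} (hpq : p ≠ q)
    (h : bary (c ++ p :: List.replicate k q) t = bary (c ++ q :: List.replicate k p) s) :
    t = q ∧ s = p := by
  induction c with
  | nil =>
    exact ⟨((bary_eq_one_iff _ _ _).1 (bary_eq_one_of_cons_ne (Ne.symm hpq) h.symm)).2,
      ((bary_eq_one_iff _ _ _).1 (bary_eq_one_of_cons_ne hpq h)).2⟩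
  | cons a c ih => exact ih (bary_cons_injective h)

end Barycentric

section Geometry

variable {n : ℕ} (pts : Fin n → Amb n)

lemma fList_append (l l' : List (Fin n)) (x : Amb n) :
    fList pts (l ++ l') x = fList pts l (fList pts l' x) := by
  induction l with
  | nil => rfl
  | cons i l ih => simp [fList, ih]

lemma fmap_self (i : Fin n) : fmap pts i (pts i) = pts i := by
  rw [fmap, ← two_smul ℝ, smul_smul, inv_mul_cancel₀ two_ne_zero, one_smul]

lemma fList_replicate_self (k : ℕ) (i : Fin n) :
    fList pts (List.replicate k i) (pts i) = pts i := by
  induction k with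
  | zero => rfl
  | succ k ih => simp [List.replicate_succ, fList, ih, fmap_self]

lemma fList_snoc_self (w : List (Fin n)) (s : Fin n) :
    fList pts (w ++ [s]) (pts s) = fList pts w (pts s) := by
  simp [fList_append, fList, fmap_self]

lemma fList_junction_symm (c : List (Fin n)) (p q : Fin n) (k : ℕ) :
    fList pts (c ++ q :: List.replicate k p) (pts p) =
      fList pts (c ++ p :: List.replicate k q) (pts q) := by
  have h (a b : Fin n) :
      fList pts (c ++ a :: List.replicate k b) (pts b) = fList pts c (fmap pts a (pts b)) := by
    rw [← List.singleton_append, fList_append, fList_append, fList_replicate_self]; rfl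
  rw [h, h, fmap, fmap, add_comm]

lemma fList_eq_sum_bary (l : List (Fin n)) (j : Fin n) :
    fList pts l (pts j) = ∑ r, bary l j r • pts r := by
  induction l with
  | nil => simp [fList, bary, ite_smul]
  | cons i l ih =>
    simp only [fList, Function.comp_apply, fmap, ih, bary, div_eq_inv_mul, mul_smul, add_smul,
      ← Finset.smul_sum, Finset.sum_add_distrib, ite_smul, one_smul, zero_smul,
      Finset.sum_ite_eq', Finset.mem_univ, if_true, add_comm]

variable {pts}

lemma bary_eq_of_fList_eq (hpts : AffineIndependent ℝ pts) {l l' : List (Fin n)} {j j' : Fin n}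
    (h : fList pts l (pts j) = fList pts l' (pts j')) : bary l j = bary l' j' := by
  refine (affineIndependent_iff_eq_of_fintype_affineCombination_eq ℝ pts).1 hpts _ _
    (sum_bary l j) (sum_bary l' j') ?_
  rw [Finset.affineCombination_eq_linear_combination _ _ _ (sum_bary l j),
    Finset.affineCombination_eq_linear_combination _ _ _ (sum_bary l' j'),
    ← fList_eq_sum_bary, ← fList_eq_sum_bary, h]

lemma fList_vertex_injective (hpts : AffineIndependent ℝ pts) (l : List (Fin n)) :
    Function.Injective fun j => fList pts l (pts j) :=
  fun _ _ h => bary_injective l (bary_eq_of_fList_eq hpts h)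

variable (pts)

lemma mem_V_iff {m : ℕ} {y : Amb n} :
    y ∈ V pts m ↔ ∃ l : List (Fin n), l.length = m ∧ ∃ j, fList pts l (pts j) = y := by
  simp only [V, Set.mem_iUnion, Set.mem_image, Set.mem_range, fWord, exists_exists_eq_and]
  rw [← List.exists_ofFn_iff]

lemma V_zero : V pts 0 = Set.range pts := by
  ext y
  simp [mem_V_iff, fList]

lemma adj_iff {m : ℕ} {x y : Amb n} :
    Adj pts m x y ↔ x ≠ y ∧ ∃ l : List (Fin n), l.length = m ∧
      ∃ i j, fList pts l (pts i) = x ∧ fList pts l (pts j) = y := by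
  simp only [Adj, Set.mem_image, Set.mem_range, fWord, exists_exists_eq_and]
  rw [← List.exists_ofFn_iff]
  simp only [exists_and_left, exists_and_right]

variable {pts}

section Junction

variable {c : List (Fin n)} {p q : Fin n} {k m : ℕ}

lemma junction_not_mem_V_zero (hpts : AffineIndependent ℝ pts) (hpq : p ≠ q) :
    fList pts (c ++ p :: List.replicate k q) (pts q) ∉ V pts 0 := by
  rw [V_zero]
  rintro ⟨i, hi⟩
  have h : bary [] i = bary (c ++ p :: List.replicate k q) q := bary_eq_of_fList_eq hpts hi
  exact bary_junction_ne_one hpq i (by rw [← h]; simp [bary])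

lemma adj_junction_iff (hpts : AffineIndependent ℝ pts) (hpq : p ≠ q)
    (hm : (c ++ p :: List.replicate k q).length = m) {y : Amb n} :
    Adj pts m (fList pts (c ++ p :: List.replicate k q) (pts q)) y ↔
      fList pts (c ++ p :: List.replicate k q) (pts q) ≠ y ∧
        ((∃ t, fList pts (c ++ p :: List.replicate k q) (pts t) = y) ∨
          ∃ s, fList pts (c ++ q :: List.replicate k p) (pts s) = y) := by
  rw [adj_iff]
  refine and_congr_right fun _ => ⟨?_, ?_⟩
  · rintro ⟨l, hl, i, j, hi, rfl⟩
    rcases eq_of_bary_eq_junction hpq (hl.trans hm.symm) (bary_eq_of_fList_eq hpts hi) with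
      ⟨rfl, -⟩ | ⟨rfl, -⟩
    exacts [Or.inl ⟨j, rfl⟩, Or.inr ⟨j, rfl⟩]
  · rintro (⟨t, rfl⟩ | ⟨s, rfl⟩)
    · exact ⟨_, hm, q, t, rfl, rfl⟩
    · exact ⟨_, by simpa using hm, p, s, fList_junction_symm pts c p q k, rfl⟩

theorem lap_junction (hpts : AffineIndependent ℝ pts) (hpq : p ≠ q)
    (hm : (c ++ p :: List.replicate k q).length = m) (u : Amb n → ℝ) :
    lap pts m u (fList pts (c ++ p :: List.replicate k q) (pts q)) =
      2 * n * u (fList pts (c ++ p :: List.replicate k q) (pts q))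
        - ∑ r, u (fList pts (c ++ p :: List.replicate k q) (pts r))
        - ∑ r, u (fList pts (c ++ q :: List.replicate k p) (pts r)) := by
  classical
  set vA := fun t => fList pts (c ++ p :: List.replicate k q) (pts t)
  set vB := fun s => fList pts (c ++ q :: List.replicate k p) (pts s)
  have hnbrs : {y | Adj pts m (vA q) y} =
      ↑((Finset.univ.image vA ∪ Finset.univ.image vB).erase (vA q)) := by
    ext y
    simp [vA, vB, adj_junction_iff hpts hpq hm, ne_comm, and_comm]
  have hinter : ∑ y ∈ Finset.univ.image vA ∩ Finset.univ.image vB, (u (vA q) - u y) = 0 := by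
    refine Finset.sum_eq_zero fun y hy => ?_
    simp only [Finset.mem_inter, Finset.mem_image, Finset.mem_univ, true_and] at hy
    obtain ⟨⟨t, rfl⟩, s, hs⟩ := hy
    rw [(eq_of_bary_eq_junction_swap hpq (bary_eq_of_fList_eq hpts hs.symm)).1, sub_self]
  rw [lap, hnbrs, finsum_mem_coe_finset, Finset.sum_erase _ (sub_self _),
    ← add_zero (Finset.sum _ _), ← hinter, Finset.sum_union_inter,
    Finset.sum_image fun _ _ _ _ h => fList_vertex_injective hpts _ h,
    Finset.sum_image fun _ _ _ _ h => fList_vertex_injective hpts _ h]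
  simp [Finset.sum_sub_distrib]
  ring

theorem _root_.IsEigen.junction_eq {u : Amb n → ℝ} {lam : ℝ} (hu : IsEigen pts m u lam)
    (hpts : AffineIndependent ℝ pts) (hpq : p ≠ q)
    (hm : (c ++ p :: List.replicate k q).length = m) :
    2 * n * u (fList pts (c ++ p :: List.replicate k q) (pts q))
        - ∑ r, u (fList pts (c ++ p :: List.replicate k q) (pts r))
        - ∑ r, u (fList pts (c ++ q :: List.replicate k p) (pts r)) =
      lam * u (fList pts (c ++ p :: List.replicate k q) (pts q)) := by
  rw [← lap_junction hpts hpq hm u]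
  exact hu _ ⟨(mem_V_iff pts).2 ⟨_, hm, q, rfl⟩, junction_not_mem_V_zero hpts hpq⟩

end Junction

end Geometry

section CellEquations

variable {ι : Type*} [Fintype ι]

/-- The `Δ_m`-eigenvalue equations at the points `M s t = u(f_{ws}(x_t))`, `s ≠ t`, of an
`(m-1)`-cell `f_w`. -/
def CellEquations (lam : ℝ) (M : ι → ι → ℝ) : Prop :=
  ∀ s t, s ≠ t → 2 * Fintype.card ι * M s t - ∑ r, M s r - ∑ r, M t r = lam * M s t

namespace CellEquations

variable {lam : ℝ} {M : ι → ι → ℝ}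

theorem row_sum (hM : CellEquations lam M) (s : ι) :
    (Fintype.card ι + 2 - lam) * ∑ r, M s r =
      (2 * Fintype.card ι - lam) * M s s + ∑ a, ∑ r, M a r := by
  classical
  have h := Finset.sum_eq_single (s := Finset.univ)
    (f := fun t => 2 * Fintype.card ι * M s t - ∑ r, M s r - ∑ r, M t r - lam * M s t) s
    (fun t _ hts => sub_eq_zero.2 (hM s t hts.symm)) (by simp)
  simp only [Finset.sum_sub_distrib, ← Finset.mul_sum, Finset.sum_const, Finset.card_univ,
    nsmul_eq_mul] at h
  linear_combination h

theorem total_sum (hM : CellEquations lam M) :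
    (2 - lam) * ∑ a, ∑ r, M a r = (2 * Fintype.card ι - lam) * ∑ a, M a a := by
  have h := Finset.sum_congr rfl fun s (_ : s ∈ Finset.univ) => hM.row_sum s
  simp only [← Finset.mul_sum, Finset.sum_add_distrib, Finset.sum_const, Finset.card_univ,
    nsmul_eq_mul] at h
  linear_combination h

theorem row_sum_eq (hM : CellEquations lam M) (s : ι) :
    (2 - lam) * (Fintype.card ι + 2 - lam) * ∑ r, M s r =
      (2 - lam) * (2 * Fintype.card ι - lam) * M s s +
        (2 * Fintype.card ι - lam) * ∑ a, M a a := by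
  linear_combination (2 - lam) * hM.row_sum s + hM.total_sum

end CellEquations

end CellEquations

theorem _root_.IsEigen.cellEquations {n m : ℕ} {pts : Fin n → Amb n} {u : Amb n → ℝ}
    {lam : ℝ} (hu : IsEigen pts m u lam) (hpts : AffineIndependent ℝ pts) {w : List (Fin n)}
    (hw : w.length + 1 = m) :
    CellEquations lam fun s t => u (fList pts (w ++ [s]) (pts t)) := fun s t hst => by
  simpa using hu.junction_eq hpts (c := w) (k := 0) hst (by simpa using hw)

end SpectralDecimation

open SpectralDecimation in
theorem eigenvalue_recursion_necessary_general
    (n : ℕ) (pts : Fin n → Amb n) (hpts : AffineIndependent ℝ pts)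
    (m : ℕ) (lamm lamm1 : ℝ)
    (h2n : lamm ≠ 2 * n)
    (u : Amb n → ℝ)
    (hu : IsEigen pts m u lamm)
    (hres : IsEigen pts (m - 1) u lamm1)
    (hnz : ∃ x ∈ V pts (m - 1) \ V pts 0, u x ≠ 0) :
    lamm ^ 2 - ((n : ℝ) + 2) * lamm + lamm1 = 0 := by
  obtain ⟨x, ⟨hxV, hxV0⟩, hux⟩ := hnz
  obtain ⟨l, hl, j, rfl⟩ := (mem_V_iff pts).1 hxV
  obtain ⟨c, p, k, hpj, rfl⟩ := List.exists_eq_append_cons_replicate (l := l) (j := j) fun h =>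
    hxV0 (by rw [V_zero, h, fList_replicate_self]; exact ⟨j, rfl⟩)
  have hlen : (c ++ p :: List.replicate k j).length + 1 = m := by simp at hl ⊢; omega
  have coarse := hres.junction_eq hpts hpj hl
  have fine := hu.junction_eq hpts hpj (k := k + 1) (by simp at hlen ⊢; omega)
  simp only [List.replicate_succ', ← List.cons_append, ← List.append_assoc,
    fList_snoc_self] at fine
  have cellA := (hu.cellEquations hpts hlen).row_sum_eq j
  have cellB := (hu.cellEquations hpts (w := c ++ j :: List.replicate k p)
    (by simpa using hlen)).row_sum_eq p
  simp only [fList_snoc_self, fList_junction_symm, Fintype.card_fin] at cellA cellB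
  have key : (2 * n - lamm) * ((lamm ^ 2 - (n + 2) * lamm + lamm1) *
      u (fList pts (c ++ p :: List.replicate k j) (pts j))) = 0 := by
    linear_combination
      cellA + cellB + (2 - lamm) * (n + 2 - lamm) * fine - (2 * n - lamm) * coarse
  simpa [sub_ne_zero.2 h2n.symm, hux] using key

/-- Necessity of the eigenvalue recursion (equation (11)). -/
theorem eigenvalue_recursion_necessary
    (n : ℕ) (hn : 2 ≤ n) (pts : Fin n → Amb n) (hpts : AffineIndependent ℝ pts)
    (m : ℕ) (hm : 2 ≤ m) (lamm lamm1 : ℝ)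
    (h2 : lamm ≠ 2) (hn2 : lamm ≠ (n : ℝ) + 2) (h2n : lamm ≠ 2 * n)
    (u : Amb n → ℝ)
    (hu : IsEigen pts m u lamm)
    (hres : IsEigen pts (m - 1) u lamm1)
    (hnz : ∃ x ∈ V pts (m - 1) \ V pts 0, u x ≠ 0) :
    lamm ^ 2 - ((n : ℝ) + 2) * lamm + lamm1 = 0 :=
  eigenvalue_recursion_necessary_general n pts hpts m lamm lamm1 h2n u hu hres hnz
end
end

section
/- The F-sum identity (equation (4) of the paper): Let m ≥ 1, fix a word a ∈ (Fin n)^{m−1} and indices a₀ ≠ b₀ with a₀, b₀ < n, and suppose u : ℝ^{n−1} → ℝ is an eigenfunction of Δ_m with eigenvalue λ. Then (n − λ) · ∑_{x_{i,j} ∈ F_{a₀,b₀}} u(x_{i,j}) = 4 · ∑_{x_{i,j} ∈ G_{a₀,b₀}} u(x_{i,j}) + (n−2)(u(x_{a₀,a₀}) + u(x_{b₀,b₀})) + 2(n−2)·u(x_{a₀,b₀}) + 2·∑_{j ≠ a₀, b₀} u(x_{j,j}). -/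
open Finset

noncomputable section

/-!
In barycentric coordinates with respect to the affinely independent `x_r`, the point
`f_l (x_k)` has coordinates `2^{-|l|} (e_k + W l)`, where `W l = ∑_s 2^{|l|-1-s} e_{l_s}`
(`wordWeight l`) records the binary digits of the word `l`. Comparing these integer vectors
(mod 2 in the last digit) shows that for `i ≠ j` the point `x_{i,j}` is not in `V_0` and lies
only in the two cells of the words `a i` and `a j`, which meet only at `x_{i,j}`. Hence
`Δ_m u (x_{i,j}) = 2n u(x_{i,j}) - R_i - R_j` with `R_i = ∑_k u(x_{i,k})`, i.e.
`(2n - λ) u(x_{i,j}) = R_i + R_j`. Summing this over `i ∈ S = {a₀, b₀}`, `j ∉ S` and splitting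
each `R` along `S` and its complement gives the identity.
-/

section WordWeight

variable {α : Type*} [DecidableEq α]

def wordWeight : List α → α → ℕ
  | [] => 0
  | c :: t => 2 ^ t.length • Pi.single c 1 + wordWeight t

lemma wordWeight_append_singleton (l : List α) (c : α) :
    wordWeight (l ++ [c]) = 2 • wordWeight l + Pi.single c 1 := by
  induction l with
  | nil => simp [wordWeight]
  | cons d t ih =>
    simp only [List.cons_append, wordWeight, List.length_append, List.length_singleton, ih,
      pow_succ]
    ext r
    simp only [Pi.add_apply, Pi.smul_apply, smul_eq_mul]
    ring

lemma wordWeight_lt (l : List α) (r : α) : wordWeight l r < 2 ^ l.length := by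
  induction l with
  | nil => simp [wordWeight]
  | cons c t ih =>
    simp only [wordWeight, Pi.add_apply, Pi.smul_apply, smul_eq_mul, Pi.single_apply,
      List.length_cons, pow_succ]
    split_ifs <;> omega

lemma wordWeight_injective {l l' : List α} (hl : l.length = l'.length)
    (h : wordWeight l = wordWeight l') : l = l' := by
  induction l generalizing l' with
  | nil => exact (List.length_eq_zero_iff.mp hl.symm).symm
  | cons c t ih =>
    obtain _ | ⟨d, t'⟩ := l'
    · simp at hl
    · simp only [List.length_cons, Nat.add_right_cancel_iff] at hl
      have hc := congr_fun h c
      have hcd : d = c := by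
        by_contra hne
        have := wordWeight_lt t' c
        simp only [wordWeight, Pi.add_apply, Pi.smul_apply, smul_eq_mul, Pi.single_eq_same,
          Pi.single_eq_of_ne' hne] at hc
        rw [hl] at hc
        omega
      subst hcd
      simp only [wordWeight, hl, add_right_inj] at h
      rw [ih hl h]

lemma sum_wordWeight [Fintype α] (l : List α) : ∑ r, wordWeight l r + 1 = 2 ^ l.length := by
  induction l with
  | nil => simp [wordWeight]
  | cons c t ih =>
    simp only [wordWeight, Pi.add_apply, Pi.smul_apply, smul_eq_mul, sum_add_distrib,
      ← mul_sum, sum_pi_single', mem_univ, if_true, List.length_cons, pow_succ]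
    omega

end WordWeight

lemma sym2_eq_and_eq_of_single_add_single_add_two_nsmul_eq {α : Type*} [DecidableEq α]
    {i j k l : α} {A B : α → ℕ} (hij : i ≠ j)
    (h : Pi.single k 1 + Pi.single l 1 + 2 • A = Pi.single i 1 + Pi.single j 1 + 2 • B) :
    s(k, l) = s(i, j) ∧ A = B := by
  have hi := congr_fun h i
  have hj := congr_fun h j
  simp only [Pi.add_apply, Pi.smul_apply, smul_eq_mul, Pi.single_apply,
    if_neg hij, if_neg hij.symm] at hi hj
  have hsym : s(k, l) = s(i, j) := by
    rw [Sym2.eq_iff]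
    split_ifs at hi hj <;> subst_vars <;> first | omega | simp_all
  refine ⟨hsym, ?_⟩
  have hpair : (Pi.single k 1 + Pi.single l 1 : α → ℕ) = Pi.single i 1 + Pi.single j 1 := by
    rcases Sym2.eq_iff.mp hsym with ⟨rfl, rfl⟩ | ⟨rfl, rfl⟩
    · rfl
    · exact add_comm _ _
  rw [hpair] at h
  funext r
  have := congr_fun (add_left_cancel h) r
  simp only [Pi.smul_apply, smul_eq_mul] at this
  omega

section Contractions

variable {n : ℕ} (pts : Fin n → Amb n)

lemma fList_apply (l : List (Fin n)) (x : Amb n) :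
    fList pts l x
      = ((2 : ℝ) ^ l.length)⁻¹ • (x + ∑ r, (wordWeight l r : ℝ) • pts r) := by
  induction l with
  | nil => simp [fList, wordWeight]
  | cons c t ih =>
    have hsum : ∑ r, (wordWeight (c :: t) r : ℝ) • pts r
        = (2 : ℝ) ^ t.length • pts c + ∑ r, (wordWeight t r : ℝ) • pts r := by
      simp only [wordWeight, Pi.add_apply, Pi.smul_apply, smul_eq_mul, Pi.single_apply,
        Nat.cast_add, Nat.cast_pow, Nat.cast_ite, add_smul, sum_add_distrib,
        mul_ite, mul_one, mul_zero, Nat.cast_zero, ite_smul, zero_smul,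
        sum_ite_eq', mem_univ, if_true, Nat.cast_ofNat]
    simp only [fList, Function.comp_apply, ih, hsum, fmap, List.length_cons, pow_succ]
    match_scalars <;> field_simp

lemma fList_append (l₁ l₂ : List (Fin n)) :
    fList pts (l₁ ++ l₂) = fList pts l₁ ∘ fList pts l₂ := by
  induction l₁ with
  | nil => rfl
  | cons c t ih => simp [fList, ih, Function.comp_assoc]

lemma single_add_wordWeight_eq_of_fList_eq (hpts : AffineIndependent ℝ pts) {l l' : List (Fin n)}
    (hl : l.length = l'.length) {k k' : Fin n} (h : fList pts l (pts k) = fList pts l' (pts k')) :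
    Pi.single k 1 + wordWeight l = Pi.single k' 1 + wordWeight l' := by
  have hpoint : ∀ (l : List (Fin n)) (k : Fin n),
      ∑ r, ((Pi.single k 1 + wordWeight l : Fin n → ℕ) r : ℝ) • pts r
        = pts k + ∑ r, (wordWeight l r : ℝ) • pts r := by
    intro l k
    simp [Pi.single_apply, add_smul, sum_add_distrib, ite_smul]
  have hmass : ∀ (l : List (Fin n)) (k : Fin n),
      ∑ r, ((Pi.single k 1 + wordWeight l : Fin n → ℕ) r : ℝ) = 2 ^ l.length := by
    intro l k
    have hsum : ∑ r, (Pi.single k 1 + wordWeight l : Fin n → ℕ) r = 2 ^ l.length := by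
      rw [← sum_wordWeight l]
      simp [sum_add_distrib, add_comm]
    exact_mod_cast hsum
  rw [fList_apply, fList_apply, hl] at h
  have h' := smul_right_injective (Amb n) (inv_ne_zero (pow_ne_zero l'.length two_ne_zero)) h
  rw [← hpoint, ← hpoint] at h'
  funext r
  exact_mod_cast hpts.eq_of_sum_eq_sum (by rw [hmass, hmass, hl]) h' r (mem_univ r)

end Contractions

lemma List.ofFn_snoc {α : Type*} {m : ℕ} (a : Fin m → α) (c : α) :
    List.ofFn (Fin.snoc a c : Fin (m + 1) → α) = List.ofFn a ++ [c] := by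
  rw [List.ofFn_succ_last]
  simp

section Cells

variable {n m : ℕ} (pts : Fin n → Amb n)

lemma fWord_const_vertex (r : Fin n) : fWord pts (fun _ : Fin m => r) (pts r) = pts r := by
  rw [fWord, List.ofFn_const]
  induction m with
  | zero => rfl
  | succ m ih =>
    simp only [List.replicate_succ, fList, Function.comp_apply, ih, fmap]
    module

lemma xpt_comm (a : Fin m → Fin n) (r s : Fin n) : xpt pts a r s = xpt pts a s r := by
  rw [xpt, xpt, add_comm]

lemma xpt_eq_fWord_snoc (a : Fin m → Fin n) (c k : Fin n) :
    xpt pts a c k = fWord pts (Fin.snoc a c : Fin (m + 1) → Fin n) (pts k) := by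
  rw [fWord, List.ofFn_snoc, fList_append, xpt, add_comm]
  rfl

lemma image_fWord_snoc (a : Fin m → Fin n) (c : Fin n) :
    fWord pts (Fin.snoc a c : Fin (m + 1) → Fin n) '' Set.range pts
      = Set.range (xpt pts a c) := by
  rw [← Set.range_comp]
  exact congrArg Set.range (funext fun k => (xpt_eq_fWord_snoc pts a c k).symm)

lemma wordWeight_ofFn_snoc (a : Fin m → Fin n) (c : Fin n) :
    wordWeight (List.ofFn (Fin.snoc a c : Fin (m + 1) → Fin n))
      = 2 • wordWeight (List.ofFn a) + Pi.single c 1 := by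
  rw [List.ofFn_snoc, wordWeight_append_singleton]

variable {pts}

lemma xpt_eq_xpt_iff (hpts : AffineIndependent ℝ pts) (a : Fin m → Fin n) {i j k k' : Fin n} :
    xpt pts a i k = xpt pts a j k' ↔ s(i, k) = s(j, k') := by
  constructor
  · intro h
    rw [xpt_eq_fWord_snoc, xpt_eq_fWord_snoc] at h
    have hw := single_add_wordWeight_eq_of_fList_eq pts hpts (by simp) h
    rw [wordWeight_ofFn_snoc, wordWeight_ofFn_snoc] at hw
    have hpair : 2 • wordWeight (List.ofFn a) + (Pi.single i 1 + Pi.single k 1)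
        = 2 • wordWeight (List.ofFn a) + (Pi.single j 1 + Pi.single k' 1) := by
      convert hw using 1 <;> abel
    rcases (Pi.single_add_single_eq_single_add_single one_ne_zero one_ne_zero).mp
      (add_left_cancel hpair) with ⟨rfl, rfl⟩ | ⟨-, rfl, rfl⟩ | ⟨h2, -⟩
    · rfl
    · exact Sym2.eq_swap
    · omega
  · rw [Sym2.eq_iff]
    rintro (⟨rfl, rfl⟩ | ⟨rfl, rfl⟩)
    · rfl
    · exact xpt_comm pts a _ _

lemma xpt_injective (hpts : AffineIndependent ℝ pts) (a : Fin m → Fin n) (c : Fin n) :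
    Function.Injective (xpt pts a c) :=
  fun _ _ h => Sym2.congr_right.mp ((xpt_eq_xpt_iff hpts a).mp h)

lemma range_xpt_inter_range_xpt (hpts : AffineIndependent ℝ pts) (a : Fin m → Fin n)
    {i j : Fin n} (hij : i ≠ j) :
    Set.range (xpt pts a i) ∩ Set.range (xpt pts a j) = {xpt pts a i j} := by
  ext y
  simp only [Set.mem_inter_iff, Set.mem_range, Set.mem_singleton_iff]
  constructor
  · rintro ⟨⟨k, rfl⟩, ⟨k', hk'⟩⟩
    rcases Sym2.eq_iff.mp ((xpt_eq_xpt_iff hpts a).mp hk') with ⟨rfl, -⟩ | ⟨rfl, -⟩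
    · exact absurd rfl hij
    · rfl
  · rintro rfl
    exact ⟨⟨j, rfl⟩, ⟨i, xpt_comm pts a j i⟩⟩

lemma eq_snoc_of_fWord_eq_xpt (hpts : AffineIndependent ℝ pts) {a : Fin m → Fin n}
    {i j k : Fin n} (hij : i ≠ j) {w : Fin (m + 1) → Fin n}
    (h : fWord pts w (pts k) = xpt pts a i j) :
    (w = Fin.snoc a i ∧ k = j) ∨ (w = Fin.snoc a j ∧ k = i) := by
  rw [← Fin.snoc_init_self w, xpt_eq_fWord_snoc] at h
  have hw := single_add_wordWeight_eq_of_fList_eq pts hpts (by simp) h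
  rw [wordWeight_ofFn_snoc, wordWeight_ofFn_snoc] at hw
  have hpair : Pi.single k 1 + Pi.single (w (Fin.last m)) 1
        + 2 • wordWeight (List.ofFn (Fin.init w))
      = Pi.single j 1 + Pi.single i 1 + 2 • wordWeight (List.ofFn a) := by
    convert hw using 1 <;> abel
  obtain ⟨hsym, hinit⟩ := sym2_eq_and_eq_of_single_add_single_add_two_nsmul_eq hij.symm hpair
  have hinit : Fin.init w = a :=
    List.ofFn_injective (wordWeight_injective (by simp) hinit)
  rw [← Fin.snoc_init_self w, hinit]
  rcases Sym2.eq_iff.mp hsym with ⟨rfl, hc⟩ | ⟨rfl, hc⟩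
  · exact Or.inl ⟨by rw [hc], rfl⟩
  · exact Or.inr ⟨by rw [hc], rfl⟩

end Cells

section Laplacian

variable {n m : ℕ} {pts : Fin n → Amb n}

lemma xpt_mem_V_sdiff_V_zero (hpts : AffineIndependent ℝ pts) (a : Fin m → Fin n)
    {i j : Fin n} (hij : i ≠ j) : xpt pts a i j ∈ V pts (m + 1) \ V pts 0 := by
  refine ⟨Set.mem_iUnion.mpr ⟨Fin.snoc a i, ?_⟩, fun h => ?_⟩
  · rw [image_fWord_snoc]
    exact Set.mem_range_self j
  · obtain ⟨_, _, ⟨r, rfl⟩, hr⟩ := Set.mem_iUnion.mp h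
    have hconst : fWord pts (fun _ : Fin (m + 1) => r) (pts r) = xpt pts a i j := by
      rw [fWord_const_vertex, ← hr]
      rfl
    rcases eq_snoc_of_fWord_eq_xpt hpts hij hconst with ⟨hw, rfl⟩ | ⟨hw, rfl⟩
    · exact hij (by simpa using (congr_fun hw (Fin.last m)).symm)
    · exact hij (by simpa using congr_fun hw (Fin.last m))

lemma setOf_adj_xpt (hpts : AffineIndependent ℝ pts) (a : Fin m → Fin n) {i j : Fin n}
    (hij : i ≠ j) :
    {y | Adj pts (m + 1) (xpt pts a i j) y}
      = (Set.range (xpt pts a i) ∪ Set.range (xpt pts a j)) \ {xpt pts a i j} := by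
  ext y
  simp only [Adj, Set.mem_ofPred_eq, Set.mem_sdiff, Set.mem_union, Set.mem_singleton_iff]
  constructor
  · rintro ⟨hne, w, ⟨_, ⟨k, rfl⟩, hx⟩, hy⟩
    refine ⟨?_, Ne.symm hne⟩
    rcases eq_snoc_of_fWord_eq_xpt hpts hij hx with ⟨rfl, -⟩ | ⟨rfl, -⟩
    · exact Or.inl (image_fWord_snoc pts a i ▸ hy)
    · exact Or.inr (image_fWord_snoc pts a j ▸ hy)
  · rintro ⟨hy, hne⟩
    refine ⟨Ne.symm hne, ?_⟩
    rcases hy with hy | hy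
    · refine ⟨Fin.snoc a i, ?_, ?_⟩ <;> rw [image_fWord_snoc]
      exacts [Set.mem_range_self j, hy]
    · refine ⟨Fin.snoc a j, ?_, ?_⟩ <;> rw [image_fWord_snoc]
      exacts [⟨i, xpt_comm pts a j i⟩, hy]

lemma lap_xpt (hpts : AffineIndependent ℝ pts) (a : Fin m → Fin n) {i j : Fin n} (hij : i ≠ j)
    (u : Amb n → ℝ) :
    lap pts (m + 1) u (xpt pts a i j)
      = 2 * n * u (xpt pts a i j) - (∑ k, u (xpt pts a i k) + ∑ k, u (xpt pts a j k)) := by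
  set x := xpt pts a i j
  have hcell : ∀ c, ∑ᶠ y ∈ Set.range (xpt pts a c), (u x - u y)
      = n * u x - ∑ k, u (xpt pts a c k) := by
    intro c
    rw [finsum_mem_range (xpt_injective hpts a c), finsum_eq_sum_of_fintype, sum_sub_distrib]
    simp
  have hunion := finsum_mem_union_inter (f := fun y => u x - u y)
    (Set.finite_range (xpt pts a i)) (Set.finite_range (xpt pts a j))
  rw [range_xpt_inter_range_xpt hpts a hij, finsum_mem_singleton, sub_self, add_zero,
    hcell, hcell] at hunion
  rw [lap, setOf_adj_xpt hpts a hij, ← finsum_mem_insert_zero (a := x) (sub_self (u x)),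
    Set.insert_sdiff_singleton,
    Set.insert_eq_of_mem (Set.mem_union_left _ (Set.mem_range_self j)), hunion]
  ring

lemma IsEigen.sub_mul_xpt {u : Amb n → ℝ} {lam : ℝ} (hpts : AffineIndependent ℝ pts)
    (hu : IsEigen pts (m + 1) u lam) (a : Fin m → Fin n) {i j : Fin n} (hij : i ≠ j) :
    (2 * n - lam) * u (xpt pts a i j) = ∑ k, u (xpt pts a i k) + ∑ k, u (xpt pts a j k) := by
  have h := hu _ (xpt_mem_V_sdiff_V_zero hpts a hij)
  rw [lap_xpt hpts a hij] at h
  linarith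

end Laplacian

section SymmetricSums

variable {ι : Type*} [Fintype ι] {T : ι → ι → ℝ}

lemma sub_card_mul_sum_sum_compl [DecidableEq ι] (hT : ∀ i j, T i j = T j i) {μ : ℝ}
    (hstar : ∀ i j, i ≠ j → μ * T i j = ∑ k, T i k + ∑ k, T j k) (S : Finset ι) :
    (μ - Fintype.card ι) * ∑ i ∈ S, ∑ j ∈ Sᶜ, T i j
      = #Sᶜ * ∑ i ∈ S, ∑ j ∈ S, T i j + #S * ∑ i ∈ Sᶜ, ∑ j ∈ Sᶜ, T i j := by
  have hstarS : μ * ∑ i ∈ S, ∑ j ∈ Sᶜ, T i j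
      = #Sᶜ * ∑ i ∈ S, ∑ k, T i k + #S * ∑ j ∈ Sᶜ, ∑ k, T j k := by
    rw [mul_sum, sum_congr rfl fun i hi => (mul_sum _ _ _).trans (sum_congr rfl fun j hj =>
      hstar i j fun h => (mem_compl.mp hj) (h ▸ hi))]
    simp only [sum_add_distrib, sum_const, nsmul_eq_mul, ← mul_sum]
  have hrows : ∀ i, ∑ k, T i k = ∑ k ∈ S, T i k + ∑ k ∈ Sᶜ, T i k :=
    fun i => (sum_add_sum_compl S _).symm
  have hcross : ∑ j ∈ Sᶜ, ∑ k ∈ S, T j k = ∑ i ∈ S, ∑ j ∈ Sᶜ, T i j := by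
    rw [sum_comm]
    exact sum_congr rfl fun i _ => sum_congr rfl fun j _ => hT j i
  have hcard : (#S : ℝ) + #Sᶜ = Fintype.card ι := by exact_mod_cast card_add_card_compl S
  simp only [hrows, sum_add_distrib, hcross] at hstarS
  linear_combination hstarS + (∑ i ∈ S, ∑ j ∈ Sᶜ, T i j) * hcard

lemma two_mul_sum_filter_lt [LinearOrder ι] (hT : ∀ i j, T i j = T j i) (P : ι → ι → Prop)
    [DecidableRel P] (hP : ∀ i j, P i j → P j i) :
    2 * ∑ i, ∑ j ∈ univ.filter (fun j => i < j ∧ P i j), T i j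
      = ∑ p ∈ univ.filter (fun p : ι × ι => p.1 ≠ p.2 ∧ P p.1 p.2), T p.1 p.2 := by
  have hswap : ∑ i, ∑ j, (if j < i ∧ P i j then T i j else 0)
      = ∑ i, ∑ j, (if i < j ∧ P i j then T i j else 0) := by
    rw [sum_comm]
    refine sum_congr rfl fun i _ => sum_congr rfl fun j _ => ?_
    rw [hT, if_congr (and_congr Iff.rfl ⟨hP j i, hP i j⟩) rfl rfl]
  have hsplit : ∀ i j, (if i ≠ j ∧ P i j then T i j else 0)
      = (if i < j ∧ P i j then T i j else 0) + (if j < i ∧ P i j then T i j else 0) := by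
    intro i j
    rcases lt_trichotomy i j with h | rfl | h
    · simp [h, h.ne, h.not_gt]
    · simp
    · simp [h, h.ne', h.not_gt]
  simp only [sum_filter, Fintype.sum_prod_type, hsplit, sum_add_distrib, hswap]
  ring

lemma sum_filter_lt_meeting_pair_once [LinearOrder ι] (hT : ∀ i j, T i j = T j i) (a b : ι) :
    ∑ i, ∑ j ∈ univ.filter (fun j => i < j ∧ (i = a ∨ i = b ∨ j = a ∨ j = b) ∧
        ¬((i = a ∧ j = b) ∨ (i = b ∧ j = a))), T i j
      = ∑ i ∈ {a, b}, ∑ j ∈ {a, b}ᶜ, T i j := by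
  set S : Finset ι := {a, b}
  have hset : univ.filter (fun p : ι × ι => p.1 ≠ p.2 ∧
      (p.1 = a ∨ p.1 = b ∨ p.2 = a ∨ p.2 = b) ∧
      ¬((p.1 = a ∧ p.2 = b) ∨ (p.1 = b ∧ p.2 = a))) = S ×ˢ Sᶜ ∪ Sᶜ ×ˢ S := by
    ext ⟨i, j⟩
    simp only [mem_filter, mem_univ, true_and, mem_union, mem_product, mem_compl, S,
      mem_insert, mem_singleton]
    grind
  have hdisj : Disjoint (S ×ˢ Sᶜ) (Sᶜ ×ˢ S) :=
    disjoint_left.mpr fun p hp hp' => (mem_compl.mp (mem_product.mp hp').1) (mem_product.mp hp).1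
  have hswap : ∑ i ∈ Sᶜ, ∑ j ∈ S, T i j = ∑ i ∈ S, ∑ j ∈ Sᶜ, T i j := by
    rw [sum_comm]
    exact sum_congr rfl fun i _ => sum_congr rfl fun j _ => hT j i
  have h := two_mul_sum_filter_lt hT (fun i j => (i = a ∨ i = b ∨ j = a ∨ j = b) ∧
    ¬((i = a ∧ j = b) ∨ (i = b ∧ j = a))) (fun i j => by tauto)
  rw [hset, sum_union hdisj, sum_product', sum_product', hswap] at h
  linarith

lemma two_mul_sum_filter_lt_avoiding_pair_add [LinearOrder ι] (hT : ∀ i j, T i j = T j i)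
    (a b : ι) :
    2 * ∑ i, ∑ j ∈ univ.filter
        (fun j => i < j ∧ i ≠ a ∧ i ≠ b ∧ j ≠ a ∧ j ≠ b), T i j
      + ∑ j ∈ {a, b}ᶜ, T j j
      = ∑ i ∈ {a, b}ᶜ, ∑ j ∈ {a, b}ᶜ, T i j := by
  have hset : univ.filter
      (fun p : ι × ι => p.1 ≠ p.2 ∧ p.1 ≠ a ∧ p.1 ≠ b ∧ p.2 ≠ a ∧ p.2 ≠ b)
      = ({a, b}ᶜ : Finset ι).offDiag := by
    ext ⟨i, j⟩
    simp only [mem_filter, mem_univ, true_and, mem_offDiag, mem_compl, mem_insert,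
      mem_singleton]
    tauto
  rw [two_mul_sum_filter_lt hT _ (fun i j => by tauto), hset, ← sum_product',
    ← diag_union_offDiag, sum_union (disjoint_diag_offDiag _), sum_diag, add_comm]

lemma sub_card_mul_sum_pairs_meeting_pair [LinearOrder ι] (hT : ∀ i j, T i j = T j i)
    {μ : ℝ} (hstar : ∀ i j, i ≠ j → μ * T i j = ∑ k, T i k + ∑ k, T j k) {a b : ι}
    (hab : a ≠ b) :
    (μ - Fintype.card ι) * (∑ i, ∑ j ∈ univ.filter
        (fun j => i < j ∧ (i = a ∨ i = b ∨ j = a ∨ j = b) ∧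
          ¬((i = a ∧ j = b) ∨ (i = b ∧ j = a))), T i j) =
      4 * (∑ i, ∑ j ∈ univ.filter
          (fun j => i < j ∧ i ≠ a ∧ i ≠ b ∧ j ≠ a ∧ j ≠ b), T i j) +
        ((Fintype.card ι : ℝ) - 2) * (T a a + T b b) +
        2 * ((Fintype.card ι : ℝ) - 2) * T a b +
        2 * ∑ j ∈ univ.filter (fun j => j ≠ a ∧ j ≠ b), T j j := by
  have hcompl := sub_card_mul_sum_sum_compl hT hstar {a, b}
  have hpair : ∑ i ∈ {a, b}, ∑ j ∈ {a, b}, T i j = T a a + T b b + 2 * T a b := by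
    simp only [sum_pair hab, hT b a]
    ring
  have hcard : (#({a, b}ᶜ : Finset ι) : ℝ) = Fintype.card ι - 2 := by
    rw [card_compl, Nat.cast_sub (card_le_univ _), card_pair hab, Nat.cast_two]
  have hfilter : univ.filter (fun j => j ≠ a ∧ j ≠ b) = {a, b}ᶜ := by
    ext j
    simp
  rw [card_pair hab, hcard, hpair, Nat.cast_two] at hcompl
  rw [sum_filter_lt_meeting_pair_once hT, hfilter]
  linear_combination hcompl - 2 * two_mul_sum_filter_lt_avoiding_pair_add hT a b

end SymmetricSums

theorem F_sum_identity_general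
    (n : ℕ) (pts : Fin n → Amb n) (hpts : AffineIndependent ℝ pts)
    (m : ℕ) (hm : 1 ≤ m) (a : Fin (m - 1) → Fin n)
    (a0 b0 : Fin n) (hab : a0 ≠ b0) (lam : ℝ)
    (u : Amb n → ℝ) (hu : IsEigen pts m u lam) :
    ((n : ℝ) - lam) * (∑ i : Fin n, ∑ j ∈ Finset.univ.filter
        (fun j => i < j ∧ (i = a0 ∨ i = b0 ∨ j = a0 ∨ j = b0) ∧
          ¬((i = a0 ∧ j = b0) ∨ (i = b0 ∧ j = a0))), u (xpt pts a i j)) =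
      4 * (∑ i : Fin n, ∑ j ∈ Finset.univ.filter
          (fun j => i < j ∧ i ≠ a0 ∧ i ≠ b0 ∧ j ≠ a0 ∧ j ≠ b0), u (xpt pts a i j)) +
        ((n : ℝ) - 2) * (u (xpt pts a a0 a0) + u (xpt pts a b0 b0)) +
        2 * ((n : ℝ) - 2) * u (xpt pts a a0 b0) +
        2 * ∑ j ∈ Finset.univ.filter (fun j => j ≠ a0 ∧ j ≠ b0), u (xpt pts a j j) := by
  obtain ⟨m, rfl⟩ : ∃ m', m = m' + 1 := ⟨m - 1, by omega⟩
  have h := sub_card_mul_sum_pairs_meeting_pair (T := fun i j => u (xpt pts a i j))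
    (fun i j => congrArg u (xpt_comm pts a i j)) (fun i j => hu.sub_mul_xpt hpts a) hab
  rw [Fintype.card_fin] at h
  convert h using 2
  ring

/-- The F-sum identity (equation (4)). -/
theorem F_sum_identity
    (n : ℕ) (hn : 2 ≤ n) (pts : Fin n → Amb n) (hpts : AffineIndependent ℝ pts)
    (m : ℕ) (hm : 1 ≤ m) (a : Fin (m - 1) → Fin n)
    (a0 b0 : Fin n) (hab : a0 ≠ b0) (lam : ℝ)
    (u : Amb n → ℝ) (hu : IsEigen pts m u lam) :
    ((n : ℝ) - lam) * (∑ i : Fin n, ∑ j ∈ Finset.univ.filter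
        (fun j => i < j ∧ (i = a0 ∨ i = b0 ∨ j = a0 ∨ j = b0) ∧
          ¬((i = a0 ∧ j = b0) ∨ (i = b0 ∧ j = a0))), u (xpt pts a i j)) =
      4 * (∑ i : Fin n, ∑ j ∈ Finset.univ.filter
          (fun j => i < j ∧ i ≠ a0 ∧ i ≠ b0 ∧ j ≠ a0 ∧ j ≠ b0), u (xpt pts a i j)) +
        ((n : ℝ) - 2) * (u (xpt pts a a0 a0) + u (xpt pts a b0 b0)) +
        2 * ((n : ℝ) - 2) * u (xpt pts a a0 b0) +
        2 * ∑ j ∈ Finset.univ.filter (fun j => j ≠ a0 ∧ j ≠ b0), u (xpt pts a j j) :=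
  F_sum_identity_general n pts hpts m hm a a0 b0 hab lam u hu
end
end
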